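/- Let G and H be finite simple graphs containing no isolated vertices. Then γ_t(G)·γ(H) ≤ 2·γ(G □ H). -/

import Mathlib

open SimpleGraph

/-- `D` is a dominating set of `G`: every vertex not in `D` has a neighbor in `D`. -/
def IsDomSet {V : Type*} (G : SimpleGraph V) (D : Finset V) : Prop :=
  ∀ v : V, v ∉ D → ∃ u ∈ D, G.Adj u v

/-- `D` is a total dominating set of `G`: every vertex has a neighbor in `D`. -/
def IsTotalDomSet {V : Type*} (G : SimpleGraph V) (D : Finset V) : Prop :=
  ∀ v : V, ∃ u ∈ D, G.Adj u v

/-- The domination number `γ(G)`. -/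
noncomputable def domNum {V : Type*} [Fintype V] (G : SimpleGraph V) : ℕ :=
  sInf {k : ℕ | ∃ D : Finset V, IsDomSet G D ∧ D.card = k}

/-- The total domination number `γ_t(G)`. -/
noncomputable def totalDomNum {V : Type*} [Fintype V] (G : SimpleGraph V) : ℕ :=
  sInf {k : ℕ | ∃ D : Finset V, IsTotalDomSet G D ∧ D.card = k}

/-- `γ_t(G)·γ(H) ≤ 2·γ(G □ H)` for graphs without isolated vertices. -/
theorem totalDomNum_mul_domNum_le_two_mul_domNum_boxProd
    {V W : Type*} [Fintype V] [Fintype W]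
    (G : SimpleGraph V) (H : SimpleGraph W)
    (hG : ∀ v : V, ∃ u : V, G.Adj u v) (hH : ∀ w : W, ∃ u : W, H.Adj u w) :
    totalDomNum G * domNum H ≤ 2 * domNum (G □ H) := by
  classical
  -- a minimum dominating set D of G □ H
  obtain ⟨D, hD, hDcard⟩ : ∃ D : Finset (V × W),
      IsDomSet (G □ H) D ∧ D.card = domNum (G □ H) := by
    have hne : {k : ℕ | ∃ D : Finset (V × W), IsDomSet (G □ H) D ∧ D.card = k}.Nonempty :=
      ⟨Finset.univ.card, Finset.univ, fun v hv => absurd (Finset.mem_univ v) hv, rfl⟩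
    obtain ⟨D, h1, h2⟩ := Nat.sInf_mem hne
    exact ⟨D, h1, h2⟩
  -- a minimum total dominating set U of G
  obtain ⟨U, hU, hUcard⟩ : ∃ U : Finset V, IsTotalDomSet G U ∧ U.card = totalDomNum G := by
    have hne : {k : ℕ | ∃ E : Finset V, IsTotalDomSet G E ∧ E.card = k}.Nonempty := by
      refine ⟨Finset.univ.card, Finset.univ, fun v => ?_, rfl⟩
      obtain ⟨u, hu⟩ := hG v
      exact ⟨u, Finset.mem_univ u, hu⟩
    obtain ⟨U, h1, h2⟩ := Nat.sInf_mem hne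
    exact ⟨U, h1, h2⟩
  -- choice: every vertex v of G has a neighbor b v in U
  choose b hbU hbAdj using hU
  -- key A: for each u in U, the projection of the u-slab of D together with the
  -- set of "good columns" for u is a dominating set of H
  have keyA : ∀ u ∈ U, domNum H ≤ (D.filter (fun p => b p.1 = u)).card +
      (Finset.univ.filter
        (fun w : W => ∀ v : V, b v = u → ∃ v', (v', w) ∈ D ∧ G.Adj v' v)).card := by
    intro u hu
    have hdom : IsDomSet H ((D.filter (fun p => b p.1 = u)).image Prod.snd ∪
        Finset.univ.filter
          (fun w : W => ∀ v : V, b v = u → ∃ v', (v', w) ∈ D ∧ G.Adj v' v)) := by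
      intro w hw
      rw [Finset.mem_union, not_or] at hw
      obtain ⟨hw1, hw2⟩ := hw
      rw [Finset.mem_filter] at hw2
      push_neg at hw2
      obtain ⟨v, hbv, hv⟩ := hw2 (Finset.mem_univ w)
      have hvD : (v, w) ∉ D := by
        intro hmem
        exact hw1 (Finset.mem_image.mpr ⟨(v, w), Finset.mem_filter.mpr ⟨hmem, hbv⟩, rfl⟩)
      obtain ⟨p, hpD, hpAdj⟩ := hD (v, w) hvD
      rw [SimpleGraph.boxProd_adj] at hpAdj
      rcases hpAdj with ⟨ha, he⟩ | ⟨ha, he⟩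
      · -- horizontal dominator: contradicts the choice of v
        exfalso
        have he' : p.2 = w := he
        have hp' : (p.1, w) ∈ D := by rw [← he']; exact hpD
        exact hv p.1 hp' ha
      · -- vertical dominator: p.2 is in the projection and H-adjacent to w
        refine ⟨p.2, Finset.mem_union_left _ (Finset.mem_image.mpr
          ⟨p, Finset.mem_filter.mpr ⟨hpD, ?_⟩, rfl⟩), ha⟩
        have he' : p.1 = v := he
        rw [he', hbv]
    calc domNum H ≤ ((D.filter (fun p => b p.1 = u)).image Prod.snd ∪
          Finset.univ.filter
            (fun w : W => ∀ v : V, b v = u → ∃ v', (v', w) ∈ D ∧ G.Adj v' v)).card :=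
        Nat.sInf_le ⟨_, hdom, rfl⟩
      _ ≤ ((D.filter (fun p => b p.1 = u)).image Prod.snd).card +
          (Finset.univ.filter
            (fun w : W => ∀ v : V, b v = u → ∃ v', (v', w) ∈ D ∧ G.Adj v' v)).card :=
        Finset.card_union_le _ _
      _ ≤ _ := add_le_add_left Finset.card_image_le _
  -- key B: for each w, the number of u ∈ U whose block is totally dominated in
  -- layer w is at most the size of layer w of D
  have keyB : ∀ w : W,
      (U.filter (fun u => ∀ v : V, b v = u → ∃ v', (v', w) ∈ D ∧ G.Adj v' v)).card ≤
      (D.filter (fun p => p.2 = w)).card := by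
    intro w
    set Pw := (D.filter (fun p => p.2 = w)).image Prod.fst with hPw
    set Iw := U.filter (fun u => ∀ v : V, b v = u → ∃ v', (v', w) ∈ D ∧ G.Adj v' v) with hIw
    have htd : IsTotalDomSet G (Pw ∪ (U \ Iw)) := by
      intro v
      by_cases hc : b v ∈ Iw
      · rw [hIw, Finset.mem_filter] at hc
        obtain ⟨v', hv'D, hv'adj⟩ := hc.2 v rfl
        exact ⟨v', Finset.mem_union_left _ (Finset.mem_image.mpr
          ⟨(v', w), Finset.mem_filter.mpr ⟨hv'D, rfl⟩, rfl⟩), hv'adj⟩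
      · exact ⟨b v, Finset.mem_union_right _ (Finset.mem_sdiff.mpr ⟨hbU v, hc⟩), hbAdj v⟩
    have h1 : totalDomNum G ≤ (Pw ∪ (U \ Iw)).card := Nat.sInf_le ⟨_, htd, rfl⟩
    have h2 : (Pw ∪ (U \ Iw)).card ≤ Pw.card + (U.card - Iw.card) := by
      refine le_trans (Finset.card_union_le _ _) ?_
      rw [Finset.card_sdiff_of_subset (Finset.filter_subset _ _)]
    have h3 : Iw.card ≤ U.card := Finset.card_le_card (Finset.filter_subset _ _)
    have h4 : Pw.card ≤ (D.filter (fun p => p.2 = w)).card := Finset.card_image_le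
    omega
  -- counting identities
  have sumD : ∑ u ∈ U, (D.filter (fun p => b p.1 = u)).card = D.card :=
    (Finset.card_eq_sum_card_fiberwise (fun p _ => hbU p.1)).symm
  have sumDw : ∑ w : W, (D.filter (fun p => p.2 = w)).card = D.card :=
    (Finset.card_eq_sum_card_fiberwise (fun p _ => Finset.mem_univ p.2)).symm
  have swap : ∑ u ∈ U, (Finset.univ.filter
        (fun w : W => ∀ v : V, b v = u → ∃ v', (v', w) ∈ D ∧ G.Adj v' v)).card
      = ∑ w : W, (U.filter
        (fun u => ∀ v : V, b v = u → ∃ v', (v', w) ∈ D ∧ G.Adj v' v)).card := by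
    simp only [Finset.card_filter]
    exact Finset.sum_comm
  calc totalDomNum G * domNum H
      = ∑ _u ∈ U, domNum H := by rw [Finset.sum_const, smul_eq_mul, hUcard]
    _ ≤ ∑ u ∈ U, ((D.filter (fun p => b p.1 = u)).card +
          (Finset.univ.filter
            (fun w : W => ∀ v : V, b v = u → ∃ v', (v', w) ∈ D ∧ G.Adj v' v)).card) :=
        Finset.sum_le_sum keyA
    _ = D.card + ∑ w : W, (U.filter
          (fun u => ∀ v : V, b v = u → ∃ v', (v', w) ∈ D ∧ G.Adj v' v)).card := by
        rw [Finset.sum_add_distrib, sumD, swap]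
    _ ≤ D.card + ∑ w : W, (D.filter (fun p => p.2 = w)).card :=
        add_le_add_right (Finset.sum_le_sum (fun w _ => keyB w)) _
    _ = 2 * domNum (G □ H) := by rw [sumDw, hDcard]; ring
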